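/- For every λ ∈ [0, 1/2], every ν ≥ 1/2 − λ and every x > 0, I_{ν−1}(x)/I_ν(x) > (ν − 1/2 − λ + √(β² + x²))/x, where β = √(2λ) + √(ν² − (λ − 1/2)²). -/

import Mathlib

open Real

noncomputable def besselF (μ t : ℝ) : ℝ :=
  ∑' k : ℕ, t ^ k / ((Nat.factorial k : ℝ) * Real.Gamma ((k : ℝ) + μ + 1))


lemma one_div_Gamma_eq (x : ℝ) : 1 / Real.Gamma x = x / Real.Gamma (x + 1) := by
  rcases eq_or_ne x 0 with rfl | hx
  · simp [Real.Gamma_zero]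
  · rw [Real.Gamma_add_one hx, mul_comm, ← div_div, div_right_comm, div_self hx]

lemma Gamma_factorial_le (μ : ℝ) (hμ : -1 ≤ μ) :
    ∀ k : ℕ, 1 ≤ k → Real.Gamma (μ + 2) * (Nat.factorial (k - 1) : ℝ) ≤ Real.Gamma ((k : ℝ) + μ + 1) := by
  intro k hk
  induction k with
  | zero => omega
  | succ n ih =>
    rcases Nat.eq_or_lt_of_le hk with h1 | h1
    · have : n = 0 := by omega
      subst this
      norm_num
      have : (1:ℝ) + μ + 1 = μ + 2 := by ring
      rw [this]
    · have hn : 1 ≤ n := by omega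
      have ihn := ih hn
      have hpos : (0:ℝ) < Real.Gamma (μ + 2) :=
        Real.Gamma_pos_of_pos (by linarith)
      have hne : ((n:ℝ) + μ + 1) ≠ 0 := by
        have h1n : (1:ℝ) ≤ (n:ℝ) := by exact_mod_cast hn
        intro h; linarith
      have heq : ((n+1:ℕ) : ℝ) + μ + 1 = ((n:ℝ) + μ + 1) + 1 := by push_cast; ring
      rw [heq, Real.Gamma_add_one hne]
      have hfact : (Nat.factorial (n + 1 - 1) : ℝ) = (n : ℝ) * (Nat.factorial (n-1)) := by
        have : n + 1 - 1 = n := by omega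
        rw [this]
        obtain ⟨m, rfl⟩ : ∃ m, n = m + 1 := ⟨n - 1, by omega⟩
        simp only [Nat.add_sub_cancel, Nat.factorial_succ]
        push_cast
        ring
      rw [hfact]
      have h1 : (n:ℝ) ≤ (n:ℝ) + μ + 1 := by linarith
      have h2 : (0:ℝ) < Real.Gamma ((n:ℝ) + μ + 1) := by
        calc (0:ℝ) < Real.Gamma (μ+2) * (Nat.factorial (n-1) : ℝ) := by positivity
        _ ≤ _ := ihn
      calc Real.Gamma (μ + 2) * ((n:ℝ) * (Nat.factorial (n-1)))
          = (n:ℝ) * (Real.Gamma (μ+2) * (Nat.factorial (n-1))) := by ring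
        _ ≤ (n:ℝ) * Real.Gamma ((n:ℝ) + μ + 1) := by
            apply mul_le_mul_of_nonneg_left ihn (by positivity)
        _ ≤ ((n:ℝ) + μ + 1) * Real.Gamma ((n:ℝ) + μ + 1) := by
            apply mul_le_mul_of_nonneg_right h1 (le_of_lt h2)

lemma Gamma_pos_of_ge (μ : ℝ) (hμ : -1 ≤ μ) (k : ℕ) (hk : 1 ≤ k) :
    0 < Real.Gamma ((k : ℝ) + μ + 1) := by
  have h := Gamma_factorial_le μ hμ k hk
  have hpos : (0:ℝ) < Real.Gamma (μ + 2) := Real.Gamma_pos_of_pos (by linarith)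
  calc (0:ℝ) < Real.Gamma (μ+2) * (Nat.factorial (k-1) : ℝ) := by positivity
    _ ≤ _ := h

lemma Gamma_nonneg_of_ge (μ : ℝ) (hμ : -1 ≤ μ) (k : ℕ) :
    0 ≤ Real.Gamma ((k : ℝ) + μ + 1) := by
  rcases Nat.eq_zero_or_pos k with rfl | hk
  · rcases eq_or_lt_of_le hμ with h | h
    · simp [← h, Real.Gamma_zero]
    · exact le_of_lt (by simpa using Real.Gamma_pos_of_pos (by linarith : (0:ℝ) < (0:ℕ) + μ + 1))
  · exact le_of_lt (Gamma_pos_of_ge μ hμ k hk)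

lemma besselF_summable (μ : ℝ) (hμ : -1 ≤ μ) (t : ℝ) :
    Summable (fun k : ℕ => t ^ k / ((Nat.factorial k : ℝ) * Real.Gamma ((k : ℝ) + μ + 1))) := by
  rw [← summable_nat_add_iff 1]
  apply Summable.of_norm_bounded
    ((Real.summable_pow_div_factorial |t|).mul_left (|t| / Real.Gamma (μ+2)))
  intro k
  have hΓpos : 0 < Real.Gamma (((k+1:ℕ) : ℝ) + μ + 1) := Gamma_pos_of_ge μ hμ (k+1) (by omega)
  have hΓge : Real.Gamma (μ+2) * (Nat.factorial k : ℝ) ≤ Real.Gamma (((k+1:ℕ):ℝ) + μ + 1) := by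
    have := Gamma_factorial_le μ hμ (k+1) (by omega)
    simpa using this
  have hG2 : (0:ℝ) < Real.Gamma (μ+2) := Real.Gamma_pos_of_pos (by linarith)
  have hfk : (0:ℝ) < (Nat.factorial k : ℝ) := by exact_mod_cast Nat.factorial_pos k
  have hfk1 : (1:ℝ) ≤ (Nat.factorial (k+1) : ℝ) := by exact_mod_cast Nat.one_le_iff_ne_zero.mpr (Nat.factorial_pos (k+1)).ne'
  rw [Real.norm_eq_abs, abs_div, abs_pow,
    abs_of_pos (show (0:ℝ) < (Nat.factorial (k+1) : ℝ) * Real.Gamma (((k+1:ℕ):ℝ) + μ + 1) by positivity)]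
  calc |t| ^ (k+1) / ((Nat.factorial (k+1) : ℝ) * Real.Gamma (((k+1:ℕ):ℝ) + μ + 1))
      ≤ |t| ^ (k+1) / (1 * (Real.Gamma (μ+2) * (Nat.factorial k : ℝ))) := by
        apply div_le_div_of_nonneg_left (by positivity) (by positivity)
        exact mul_le_mul hfk1 hΓge (by positivity) (by linarith)
    _ = |t| / Real.Gamma (μ+2) * (|t| ^ k / (Nat.factorial k : ℝ)) := by
        rw [pow_succ]; field_simp

lemma besselF_pos (μ : ℝ) (hμ : -1 ≤ μ) (t : ℝ) (ht : 0 < t) : 0 < besselF μ t := by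
  apply Summable.tsum_pos (besselF_summable μ hμ t) _ 1
  · have h1 : 0 < Real.Gamma ((1:ℕ) + μ + 1) := Gamma_pos_of_ge μ hμ 1 le_rfl
    have : ((1:ℕ):ℝ) = 1 := by norm_num
    positivity
  · intro k
    have := Gamma_nonneg_of_ge μ hμ k
    positivity

lemma besselF_zero (μ : ℝ) : besselF μ 0 = 1 / Real.Gamma (μ + 1) := by
  unfold besselF
  rw [tsum_eq_single 0]
  · norm_num
  · intro k hk
    rw [zero_pow hk]
    norm_num

lemma shift_term_eq (μ : ℝ) (t : ℝ) (k : ℕ) :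
    ((k+1:ℕ):ℝ) * t ^ (k+1-1) / ((Nat.factorial (k+1) : ℝ) * Real.Gamma (((k+1:ℕ)) + μ + 1))
      = t ^ k / ((Nat.factorial k : ℝ) * Real.Gamma ((k : ℝ) + (μ+1) + 1)) := by
  have h1 : (k+1-1) = k := by omega
  have h2 : (Nat.factorial (k+1) : ℝ) = ((k:ℝ)+1) * (Nat.factorial k : ℝ) := by
    rw [Nat.factorial_succ]; push_cast; ring
  have h3 : (((k+1:ℕ)):ℝ) + μ + 1 = (k:ℝ) + (μ+1) + 1 := by push_cast; ring
  rw [h1, h2, h3]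
  have hk1 : ((k:ℝ)+1) ≠ 0 := by positivity
  have : (((k+1:ℕ)):ℝ) = (k:ℝ) + 1 := by push_cast; ring
  rw [this, mul_assoc]
  rw [mul_div_mul_left _ _ hk1]

lemma besselF_hasDerivAt (μ : ℝ) (hμ : -1 ≤ μ) (t : ℝ) :
    HasDerivAt (besselF μ) (besselF (μ+1) t) t := by
  set R : ℝ := |t| + 1 with hRdef
  have hR : 0 < R := by positivity
  have htR : t ∈ Set.Ioo (-R) R :=
    ⟨by simp only [hRdef]; linarith [neg_abs_le t], by simp only [hRdef]; linarith [le_abs_self t]⟩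
  set u : ℕ → ℝ := fun k => (k:ℝ) * R ^ (k-1) / ((Nat.factorial k : ℝ) * Real.Gamma ((k:ℝ) + μ + 1)) with hudef
  have hu : Summable u := by
    rw [← summable_nat_add_iff 1]
    apply (besselF_summable (μ+1) (by linarith) R).congr
    intro k
    exact (shift_term_eq μ R k).symm
  have hg : ∀ (k : ℕ) (y : ℝ), y ∈ Set.Ioo (-R) R →
      HasDerivAt (fun y : ℝ => y ^ k / ((Nat.factorial k : ℝ) * Real.Gamma ((k:ℝ) + μ + 1)))
        ((k:ℝ) * y ^ (k-1) / ((Nat.factorial k : ℝ) * Real.Gamma ((k:ℝ) + μ + 1))) y :=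
    fun k y _ => (hasDerivAt_pow k y).div_const _
  have hg' : ∀ (k : ℕ) (y : ℝ), y ∈ Set.Ioo (-R) R →
      ‖(k:ℝ) * y ^ (k-1) / ((Nat.factorial k : ℝ) * Real.Gamma ((k:ℝ) + μ + 1))‖ ≤ u k := by
    intro k y hy
    rcases Nat.eq_zero_or_pos k with rfl | hk
    · simp [hudef]
    · have hΓ : 0 < Real.Gamma ((k:ℝ) + μ + 1) := Gamma_pos_of_ge μ hμ k hk
      have hyR : |y| ≤ R := le_of_lt (abs_lt.mpr ⟨hy.1, hy.2⟩)
      rw [Real.norm_eq_abs, abs_div, abs_mul, abs_pow, Nat.abs_cast,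
        abs_of_pos (show (0:ℝ) < (Nat.factorial k : ℝ) * Real.Gamma ((k:ℝ) + μ + 1) by positivity)]
      apply div_le_div_of_nonneg_right ?_ (by positivity)
      exact mul_le_mul_of_nonneg_left (pow_le_pow_left₀ (abs_nonneg y) hyR _) (by positivity)
  have hd := hasDerivAt_tsum_of_isPreconnected hu (isOpen_Ioo)
    (convex_Ioo (-R) R).isPreconnected hg hg' htR (besselF_summable μ hμ t) htR
  have hsum : Summable (fun k : ℕ =>
      (k:ℝ) * t ^ (k-1) / ((Nat.factorial k : ℝ) * Real.Gamma ((k:ℝ) + μ + 1))) :=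
    Summable.of_norm_bounded hu (fun k => hg' k t htR)
  have heq : (∑' k : ℕ, (k:ℝ) * t ^ (k-1) / ((Nat.factorial k : ℝ) * Real.Gamma ((k:ℝ) + μ + 1)))
      = besselF (μ+1) t := by
    rw [Summable.tsum_eq_zero_add hsum]
    simp only [Nat.cast_zero, zero_mul, zero_div, zero_add]
    unfold besselF
    apply tsum_congr
    intro k
    exact shift_term_eq μ t k
  rw [← heq]
  exact hd

lemma besselF_continuousAt (μ : ℝ) (hμ : -1 ≤ μ) (t : ℝ) : ContinuousAt (besselF μ) t :=
  (besselF_hasDerivAt μ hμ t).continuousAt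

lemma besselF_rec (μ : ℝ) (hμ : 0 ≤ μ) (t : ℝ) :
    besselF (μ - 1) t = μ * besselF μ t + t * besselF (μ+1) t := by
  set c : ℕ → ℝ := fun k => (k:ℝ) * t ^ k / ((Nat.factorial k : ℝ) * Real.Gamma ((k:ℝ) + μ + 1)) with hcdef
  have hc : Summable c := by
    rw [← summable_nat_add_iff 1]
    apply ((besselF_summable (μ+1) (by linarith) t).mul_left t).congr
    intro k
    simp only [hcdef]
    have h2 : (Nat.factorial (k+1) : ℝ) = ((k:ℝ)+1) * (Nat.factorial k : ℝ) := by
      rw [Nat.factorial_succ]; push_cast; ring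
    have h3 : (((k+1:ℕ)):ℝ) + μ + 1 = (k:ℝ) + (μ+1) + 1 := by push_cast; ring
    have hk1 : ((k:ℝ)+1) ≠ 0 := by positivity
    rw [h2, h3]
    push_cast
    rw [pow_succ]
    field_simp
  have hkey : ∀ k : ℕ, t ^ k / ((Nat.factorial k : ℝ) * Real.Gamma ((k:ℝ) + (μ-1) + 1))
      = μ * (t ^ k / ((Nat.factorial k : ℝ) * Real.Gamma ((k:ℝ) + μ + 1))) + c k := by
    intro k
    have harg : (k:ℝ) + (μ-1) + 1 = (k:ℝ) + μ := by ring
    have hxg := one_div_Gamma_eq ((k:ℝ) + μ)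
    have harg2 : (k:ℝ) + μ + 1 = ((k:ℝ) + μ) + 1 := by ring
    rw [harg, hcdef]
    calc t ^ k / ((Nat.factorial k : ℝ) * Real.Gamma ((k:ℝ) + μ))
        = t ^ k / (Nat.factorial k : ℝ) * (1 / Real.Gamma ((k:ℝ) + μ)) := by
          rw [← div_div, div_eq_mul_one_div]
      _ = t ^ k / (Nat.factorial k : ℝ) * (((k:ℝ) + μ) / Real.Gamma (((k:ℝ) + μ) + 1)) := by
          rw [hxg]
      _ = μ * (t ^ k / ((Nat.factorial k : ℝ) * Real.Gamma ((k:ℝ) + μ + 1)))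
          + (k:ℝ) * t ^ k / ((Nat.factorial k : ℝ) * Real.Gamma ((k:ℝ) + μ + 1)) := by
          rw [harg2]; ring
  have hsum1 : Summable (fun k : ℕ => μ * (t ^ k / ((Nat.factorial k : ℝ) * Real.Gamma ((k:ℝ) + μ + 1)))) :=
    (besselF_summable μ (by linarith) t).mul_left μ
  calc besselF (μ-1) t = ∑' k : ℕ, (μ * (t ^ k / ((Nat.factorial k : ℝ) * Real.Gamma ((k:ℝ) + μ + 1))) + c k) := by
        unfold besselF; exact tsum_congr hkey
    _ = μ * besselF μ t + ∑' k, c k := by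
        rw [Summable.tsum_add hsum1 hc]
        unfold besselF
        rw [tsum_mul_left]
    _ = μ * besselF μ t + t * besselF (μ+1) t := by
        congr 1
        rw [Summable.tsum_eq_zero_add hc]
        simp only [hcdef, Nat.cast_zero, zero_mul, zero_div, zero_add]
        unfold besselF
        rw [← tsum_mul_left]
        apply tsum_congr
        intro k
        have h2 : (Nat.factorial (k+1) : ℝ) = ((k:ℝ)+1) * (Nat.factorial k : ℝ) := by
          rw [Nat.factorial_succ]; push_cast; ring
        have h3 : (((k+1:ℕ)):ℝ) + μ + 1 = (k:ℝ) + (μ+1) + 1 := by push_cast; ring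
        have hk1 : ((k:ℝ)+1) ≠ 0 := by positivity
        rw [h2, h3]
        push_cast
        rw [pow_succ]
        field_simp

lemma hasDerivAt_s (β τ : ℝ) (hpos : 0 < β^2 + 4*τ) :
    HasDerivAt (fun τ : ℝ => Real.sqrt (β^2+4*τ)) (2 / Real.sqrt (β^2+4*τ)) τ := by
  have h1 : HasDerivAt (fun τ : ℝ => β^2 + 4*τ) 4 τ := by
    simpa using ((hasDerivAt_id τ).const_mul (4:ℝ)).const_add (β^2)
  have h2 := (Real.hasDerivAt_sqrt (ne_of_gt hpos)).comp τ h1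
  refine h2.congr_deriv ?_
  have hs : 0 < Real.sqrt (β^2+4*τ) := Real.sqrt_pos.mpr hpos
  field_simp
  ring

lemma hasDerivAt_E (a β τ : ℝ) (hβ : 0 ≤ β) (hτ : 0 < τ) :
    HasDerivAt (fun τ : ℝ => τ ^ ((a+β)/2) * Real.exp (Real.sqrt (β^2+4*τ)) * (Real.sqrt (β^2+4*τ) + β) ^ (-β))
      ((τ ^ ((a+β)/2) * Real.exp (Real.sqrt (β^2+4*τ)) * (Real.sqrt (β^2+4*τ) + β) ^ (-β))
        * ((a + Real.sqrt (β^2+4*τ))/2 / τ)) τ := by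
  have hpos : 0 < β^2 + 4*τ := by positivity
  have hs : 0 < Real.sqrt (β^2+4*τ) := Real.sqrt_pos.mpr hpos
  have hs2 : (Real.sqrt (β^2+4*τ))^2 = β^2 + 4*τ := Real.sq_sqrt (le_of_lt hpos)
  have hsβ : 0 < Real.sqrt (β^2+4*τ) + β := by linarith
  have hds := hasDerivAt_s β τ hpos
  have P1 : HasDerivAt (fun τ : ℝ => τ ^ ((a+β)/2)) ((a+β)/2 * τ ^ ((a+β)/2-1)) τ :=
    Real.hasDerivAt_rpow_const (Or.inl (ne_of_gt hτ))
  have P2 : HasDerivAt (fun τ : ℝ => Real.exp (Real.sqrt (β^2+4*τ)))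
      (Real.exp (Real.sqrt (β^2+4*τ)) * (2/Real.sqrt (β^2+4*τ))) τ :=
    (Real.hasDerivAt_exp _).comp τ hds
  have P3 : HasDerivAt (fun τ : ℝ => (Real.sqrt (β^2+4*τ) + β) ^ (-β))
      ((-β) * (Real.sqrt (β^2+4*τ) + β) ^ (-β-1) * (2/Real.sqrt (β^2+4*τ))) τ := by
    have base : HasDerivAt (fun τ : ℝ => Real.sqrt (β^2+4*τ) + β) (2/Real.sqrt (β^2+4*τ)) τ :=
      hds.add_const β
    have := (Real.hasDerivAt_rpow_const (p := -β) (Or.inl (ne_of_gt hsβ))).comp τ base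
    exact this
  have hprod := (P1.mul P2).mul P3
  refine hprod.congr_deriv ?_
  symm
  simp only [Pi.mul_apply]
  rw [Real.rpow_sub_one (ne_of_gt hτ), Real.rpow_sub_one (ne_of_gt hsβ)]
  have hX : (0:ℝ) < τ ^ ((a+β)/2) := Real.rpow_pos_of_pos hτ _
  have hP : (0:ℝ) < (Real.sqrt (β^2+4*τ) + β) ^ (-β) := Real.rpow_pos_of_pos hsβ _
  generalize hgen : Real.sqrt (β^2+4*τ) = s at *
  generalize hgX : τ ^ ((a+β)/2) = X at *
  generalize hgP : (s + β) ^ (-β) = P at *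
  generalize hgex : Real.exp s = ex at *
  have hexpos : 0 < ex := hgex ▸ Real.exp_pos s
  field_simp
  linear_combination s * hs2

lemma hasDerivAt_h (ν a β q : ℝ) (hν0 : 0 ≤ ν) (hβ0 : 0 ≤ β)
    (hrel1 : a * (2*ν - a) = β^2 - 2*q*β) (hrel2 : 2*(ν - a) - 1 = q^2)
    (τ : ℝ) (hτ : 0 < τ) :
    HasDerivAt
      (fun τ => (besselF (ν-1) τ - (a + Real.sqrt (β^2+4*τ))/2 * besselF ν τ) *
        (τ ^ ((a+β)/2) * Real.exp (Real.sqrt (β^2+4*τ)) * (Real.sqrt (β^2+4*τ) + β) ^ (-β)))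
      (besselF ν τ * (τ ^ ((a+β)/2) * Real.exp (Real.sqrt (β^2+4*τ)) * (Real.sqrt (β^2+4*τ) + β) ^ (-β))
        * (q * Real.sqrt (β^2+4*τ) - β)^2 / (4*τ*Real.sqrt (β^2+4*τ))) τ := by
  have hpos : 0 < β^2 + 4*τ := by positivity
  have hs : 0 < Real.sqrt (β^2+4*τ) := Real.sqrt_pos.mpr hpos
  have hs2 : (Real.sqrt (β^2+4*τ))^2 = β^2 + 4*τ := Real.sq_sqrt (le_of_lt hpos)
  have hd1 : HasDerivAt (fun τ => besselF (ν-1) τ) (besselF ν τ) τ := by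
    have := besselF_hasDerivAt (ν-1) (by linarith) τ
    rw [show ν-1+1 = ν by ring] at this
    exact this
  have hdF : HasDerivAt (fun τ => besselF ν τ) (besselF (ν+1) τ) τ :=
    besselF_hasDerivAt ν (by linarith) τ
  have hdψ : HasDerivAt (fun τ => (a + Real.sqrt (β^2+4*τ))/2) (1/Real.sqrt (β^2+4*τ)) τ := by
    have := ((hasDerivAt_s β τ hpos).const_add a).div_const 2
    refine this.congr_deriv ?_
    ring
  have hdN := hd1.sub (hdψ.mul hdF)
  have hdE := hasDerivAt_E a β τ hβ0 hτ
  have hdh := hdN.mul hdE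
  refine hdh.congr_deriv ?_
  symm
  simp only [Pi.mul_apply, Pi.sub_apply]
  have hrec := besselF_rec ν hν0 τ
  have hrec' : besselF (ν+1) τ = (besselF (ν-1) τ - ν * besselF ν τ)/τ := by
    rw [eq_div_iff (ne_of_gt hτ)]
    linarith [hrec]
  rw [hrec']
  have hX : (0:ℝ) < τ ^ ((a+β)/2) := Real.rpow_pos_of_pos hτ _
  have hsβ : 0 < Real.sqrt (β^2+4*τ) + β := by linarith
  have hP : (0:ℝ) < (Real.sqrt (β^2+4*τ) + β) ^ (-β) := Real.rpow_pos_of_pos hsβ _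
  generalize hgen : Real.sqrt (β^2+4*τ) = s at *
  generalize hgX : τ ^ ((a+β)/2) = X at *
  generalize hgP : (s + β) ^ (-β) = P at *
  generalize hgex : Real.exp s = ex at *
  generalize hgF : besselF ν τ = F at *
  generalize hgFm : besselF (ν-1) τ = Fm at *
  field_simp
  linear_combination (F*ex*(4*s-4)) * hs2 + (F*ex*(-4*s)) * hrel1 + (F*ex*(-4*s^2)) * hrel2

set_option maxHeartbeats 2000000 in
lemma core (lam ν t : ℝ) (h0 : 0 ≤ lam) (h1 : lam ≤ 1/2) (hν : 1/2 - lam ≤ ν) (ht : 0 < t) :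
    (ν - 1/2 - lam + Real.sqrt ((Real.sqrt (2*lam) + Real.sqrt (ν^2 - (lam-1/2)^2))^2 + 4*t)) / 2
      * besselF ν t < besselF (ν-1) t := by
  have hν0 : 0 ≤ ν := le_trans (by linarith) hν
  set q := Real.sqrt (2*lam) with hqd
  set γ := Real.sqrt (ν^2 - (lam-1/2)^2) with hγd
  have hsqnn : 0 ≤ ν^2 - (lam-1/2)^2 := by
    nlinarith [mul_nonneg (show (0:ℝ) ≤ ν - (1/2 - lam) by linarith)
      (show (0:ℝ) ≤ ν + (1/2 - lam) by linarith)]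
  have hq0 : 0 ≤ q := Real.sqrt_nonneg _
  have hq2 : q^2 = 2*lam := Real.sq_sqrt (by linarith)
  have hγ0 : 0 ≤ γ := Real.sqrt_nonneg _
  have hγ2 : γ^2 = ν^2 - (lam-1/2)^2 := Real.sq_sqrt hsqnn
  have hγν : γ ≤ ν := by
    rw [hγd]
    calc Real.sqrt (ν^2 - (lam-1/2)^2) ≤ Real.sqrt (ν^2) :=
          Real.sqrt_le_sqrt (by nlinarith [sq_nonneg (lam - 1/2)])
      _ = ν := Real.sqrt_sq hν0
  have hq1 : q ≤ 1 := by
    rw [hqd]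
    calc Real.sqrt (2*lam) ≤ Real.sqrt 1 := Real.sqrt_le_sqrt (by linarith)
      _ = 1 := Real.sqrt_one
  set β := q + γ with hβd
  set a := ν - 1/2 - lam with had
  have hβ0 : 0 ≤ β := by rw [hβd]; linarith
  have hrel1 : a * (2*ν - a) = β^2 - 2*q*β := by
    rw [had, hβd]
    linear_combination hq2 - hγ2
  have hrel2 : 2*(ν - a) - 1 = q^2 := by
    rw [had, hq2]; ring
  have haβ : 0 ≤ a + β := by
    rw [had, hβd]
    nlinarith [mul_nonneg hq0 (show (0:ℝ) ≤ 1 - q by linarith)]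
  clear_value q γ β a
  -- functions
  set N : ℝ → ℝ := fun τ => besselF (ν-1) τ - (a + Real.sqrt (β^2+4*τ))/2 * besselF ν τ with hNd
  set E : ℝ → ℝ := fun τ => τ ^ ((a+β)/2) * Real.exp (Real.sqrt (β^2+4*τ)) * (Real.sqrt (β^2+4*τ) + β) ^ (-β) with hEd
  set H : ℝ → ℝ := fun τ => N τ * E τ with hHd
  clear_value N E H
  -- basic facts
  have hspos : ∀ τ : ℝ, 0 < τ → 0 < Real.sqrt (β^2+4*τ) := by
    intro τ hτ
    apply Real.sqrt_pos.mpr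
    nlinarith [sq_nonneg β]
  have hsβlt : ∀ τ : ℝ, 0 < τ → β < Real.sqrt (β^2+4*τ) := by
    intro τ hτ
    have hb : β = Real.sqrt (β^2) := (Real.sqrt_sq hβ0).symm
    nth_rewrite 1 [hb]
    exact Real.sqrt_lt_sqrt (sq_nonneg β) (by nlinarith)
  have hEpos : ∀ τ : ℝ, 0 < τ → 0 < E τ := by
    intro τ hτ
    have hsp := hspos τ hτ
    have h2 : 0 < Real.sqrt (β^2+4*τ) + β := by linarith
    rw [hEd]
    exact mul_pos (mul_pos (Real.rpow_pos_of_pos hτ _) (Real.exp_pos _))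
      (Real.rpow_pos_of_pos h2 _)
  -- derivative of H
  have hHderiv : ∀ τ : ℝ, 0 < τ → HasDerivAt H
      (besselF ν τ * E τ * (q * Real.sqrt (β^2+4*τ) - β)^2 / (4*τ*Real.sqrt (β^2+4*τ))) τ := by
    intro τ hτ
    have hx := hasDerivAt_h ν a β q hν0 hβ0 hrel1 hrel2 τ hτ
    rw [hHd, hNd, hEd]
    exact hx
  -- monotonicity on Ioi 0
  have hmono : MonotoneOn H (Set.Ioi (0:ℝ)) := by
    apply monotoneOn_of_deriv_nonneg (convex_Ioi 0)
    · intro τ hτ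
      exact ((hHderiv τ hτ).continuousAt).continuousWithinAt
    · rw [interior_Ioi]
      intro τ hτ
      exact ((hHderiv τ hτ).differentiableAt).differentiableWithinAt
    · rw [interior_Ioi]
      intro τ hτ
      have hτ' : (0:ℝ) < τ := hτ
      rw [(hHderiv τ hτ').deriv]
      have h1 := hspos τ hτ'
      have h2 := besselF_pos ν (by linarith) τ hτ'
      have h3 := hEpos τ hτ'
      apply div_nonneg
      · exact mul_nonneg (mul_nonneg h2.le h3.le) (sq_nonneg _)
      · exact le_of_lt (mul_pos (by linarith : (0:ℝ) < 4*τ) h1)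
  -- continuity of N at 0 and value at 0
  have hNcont : ContinuousAt N 0 := by
    rw [hNd]
    apply ContinuousAt.sub
    · exact besselF_continuousAt (ν-1) (by linarith) 0
    · apply ContinuousAt.mul
      · apply ContinuousAt.div_const
        apply ContinuousAt.add continuousAt_const
        exact (Real.continuous_sqrt.comp
          (continuous_const.add (continuous_const.mul continuous_id))).continuousAt
      · exact besselF_continuousAt ν (by linarith) 0
  have hΓpos : 0 < Real.Gamma (ν+1) := Real.Gamma_pos_of_pos (by linarith)
  have hN0 : N 0 = (2*ν - a - β)/2 * (1/Real.Gamma (ν+1)) := by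
    rw [hNd]
    simp only
    rw [show β^2 + 4*(0:ℝ) = β^2 by ring, Real.sqrt_sq hβ0]
    rw [besselF_zero, besselF_zero, show ν - 1 + 1 = ν by ring]
    rw [one_div_Gamma_eq ν]
    ring
  -- final goal is: (a + √(β^2+4t))/2 * besselF ν t < besselF (ν-1) t
  show (a + Real.sqrt (β^2+4*t))/2 * besselF ν t < besselF (ν-1) t
  suffices hNt : 0 < N t by
    rw [hNd] at hNt
    simp only at hNt
    linarith
  by_cases hl : lam < 1/2
  · -- N 0 > 0 case
    have hqlt : q < lam + 1/2 := by
      nlinarith [hq2, sq_nonneg (q - lam - 1/2),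
        mul_pos (show (0:ℝ) < 1/2 - lam by linarith) (show (0:ℝ) < 1/2 - lam by linarith)]
    have hN0pos : 0 < N 0 := by
      rw [hN0]
      have h2 : 0 < 2*ν - a - β := by rw [had, hβd]; nlinarith
      exact mul_pos (by linarith) (one_div_pos.mpr hΓpos)
    have hev : ∀ᶠ τ in nhds (0:ℝ), 0 < N τ := hNcont (Ioi_mem_nhds hN0pos)
    rw [Metric.eventually_nhds_iff] at hev
    obtain ⟨δ, hδ, hball⟩ := hev
    set t₁ := min (δ/2) (t/2) with ht₁d
    have ht₁pos : 0 < t₁ := by apply lt_min <;> linarith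
    have ht₁t : t₁ ≤ t := le_trans (min_le_right _ _) (by linarith)
    have hNt₁ : 0 < N t₁ := by
      apply hball
      rw [Real.dist_eq, sub_zero, abs_of_pos ht₁pos]
      calc t₁ ≤ δ/2 := min_le_left _ _
        _ < δ := by linarith
    have hH1 : 0 < H t₁ := by rw [hHd]; exact mul_pos hNt₁ (hEpos t₁ ht₁pos)
    have hHt : H t₁ ≤ H t := hmono ht₁pos ht ht₁t
    have hHtpos : 0 < H t := lt_of_lt_of_le hH1 hHt
    rw [hHd] at hHtpos
    simp only at hHtpos
    by_contra hc
    push_neg at hc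
    nlinarith [hEpos t ht]
  · -- lam = 1/2 case
    have hleq : lam = 1/2 := le_antisymm h1 (not_lt.mp hl)
    have hqeq : q = 1 := by rw [hqd, hleq]; norm_num
    have hγeq : γ = ν := by
      rw [hγd, hleq]
      rw [show ν^2 - (1/2-1/2:ℝ)^2 = ν^2 by ring]
      exact Real.sqrt_sq hν0
    have hβν : β = 1 + ν := by rw [hβd, hqeq, hγeq]
    have hN00 : N 0 = 0 := by
      rw [hN0, had, hβν, hleq]
      ring
    -- Step A: H nonneg on (0, t]
    have stepA : ∀ τ0 : ℝ, 0 < τ0 → τ0 ≤ t → 0 ≤ H τ0 := by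
      intro τ0 hτ0 hτ0t
      by_contra hneg
      push_neg at hneg
      set ε := -H τ0 with hεd
      have hε : 0 < ε := by linarith
      set K := Real.exp (Real.sqrt (β^2 + 4)) with hKd
      have hK : 0 < K := Real.exp_pos _
      have hev : ∀ᶠ τ in nhds (0:ℝ), N τ ∈ Metric.ball (N 0) (ε/K) :=
        hNcont (Metric.ball_mem_nhds _ (by positivity))
      rw [Metric.eventually_nhds_iff] at hev
      obtain ⟨δ, hδ, hball⟩ := hev
      set t₁ := min (δ/2) (min τ0 1) with ht₁d
      have ht₁pos : 0 < t₁ := lt_min (by linarith) (lt_min hτ0 one_pos)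
      have ht₁τ0 : t₁ ≤ τ0 := le_trans (min_le_right _ _) (min_le_left _ _)
      have ht₁1 : t₁ ≤ 1 := le_trans (min_le_right _ _) (min_le_right _ _)
      have hNs : |N t₁| < ε/K := by
        have hx := hball (y := t₁) (by
          rw [Real.dist_eq, sub_zero, abs_of_pos ht₁pos]
          calc t₁ ≤ δ/2 := min_le_left _ _
            _ < δ := by linarith)
        rw [Metric.mem_ball, Real.dist_eq, hN00, sub_zero] at hx
        exact hx
      have hsp := hspos t₁ ht₁pos
      have hβ1 : 1 ≤ β := by rw [hβν]; linarith
      have hEb : E t₁ ≤ K := by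
        rw [hEd, hKd]
        simp only
        have hs1 : Real.sqrt (β^2+4*t₁) ≤ Real.sqrt (β^2+4) := by
          apply Real.sqrt_le_sqrt; linarith
        have hsb1 : 1 ≤ Real.sqrt (β^2+4*t₁) + β := by
          have := Real.sqrt_nonneg (β^2+4*t₁); linarith
        calc t₁ ^ ((a+β)/2) * Real.exp (Real.sqrt (β^2+4*t₁)) * (Real.sqrt (β^2+4*t₁) + β) ^ (-β)
            ≤ 1 * Real.exp (Real.sqrt (β^2+4)) * 1 := by
              apply mul_le_mul
              · apply mul_le_mul
                · exact Real.rpow_le_one (le_of_lt ht₁pos) ht₁1 (by linarith)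
                · exact Real.exp_le_exp.mpr hs1
                · exact le_of_lt (Real.exp_pos _)
                · norm_num
              · exact Real.rpow_le_one_of_one_le_of_nonpos hsb1 (by linarith)
              · exact le_of_lt (Real.rpow_pos_of_pos (by linarith) _)
              · positivity
          _ = Real.exp (Real.sqrt (β^2+4)) := by ring
      have hmonot : H t₁ ≤ H τ0 := hmono ht₁pos hτ0 ht₁τ0
      have hEt₁pos := hEpos t₁ ht₁pos
      have hlow : -ε < H t₁ := by
        rw [hHd]
        simp only
        rcases le_or_gt 0 (N t₁) with hcs | hcs
        · have hnn : 0 ≤ N t₁ * E t₁ := mul_nonneg hcs hEt₁pos.le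
          linarith
        · have hh1 : N t₁ * K ≤ N t₁ * E t₁ := mul_le_mul_of_nonpos_left hEb (le_of_lt hcs)
          have hh2 : (-(ε/K)) * K < N t₁ * K := by
            apply mul_lt_mul_of_pos_right _ hK
            linarith [(abs_lt.mp hNs).1]
          have hh3 : (-(ε/K)) * K = -ε := by field_simp
          linarith
      linarith
    -- Step B: strictness
    by_contra hNt
    push_neg at hNt
    have hHt0 : H t = 0 := by
      have ha1 := stepA t ht le_rfl
      have ha2 : H t ≤ 0 := by
        rw [hHd]
        exact mul_nonpos_of_nonpos_of_nonneg hNt (le_of_lt (hEpos t ht))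
      linarith
    have hzero : ∀ τ : ℝ, τ ∈ Set.Ioo 0 t → H τ = 0 := by
      intro τ hτ
      have ha1 := stepA τ hτ.1 (le_of_lt hτ.2)
      have ha2 : H τ ≤ H t := hmono hτ.1 ht (le_of_lt hτ.2)
      linarith [hHt0]
    have hτ2a : 0 < t/2 := by linarith
    have hτ2b : t/2 < t := by linarith
    have hconst : H =ᶠ[nhds (t/2)] (fun _ => 0) := by
      apply Filter.eventuallyEq_of_mem (Ioo_mem_nhds hτ2a hτ2b)
      intro τ hτ
      exact hzero τ hτ
    have hder0 : HasDerivAt H 0 (t/2) :=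
      (hasDerivAt_const (t/2) (0:ℝ)).congr_of_eventuallyEq hconst
    have huniq := (hHderiv (t/2) hτ2a).unique hder0
    have hF := besselF_pos ν (by linarith) (t/2) hτ2a
    have hE2 := hEpos (t/2) hτ2a
    have hs2p := hspos (t/2) hτ2a
    have hsβ2 := hsβlt (t/2) hτ2a
    have hsqp : 0 < (q * Real.sqrt (β^2+4*(t/2)) - β)^2 := by
      rw [hqeq, one_mul]
      have : 0 < Real.sqrt (β^2+4*(t/2)) - β := by linarith
      positivity
    have hval : 0 < besselF ν (t/2) * E (t/2) * (q * Real.sqrt (β^2+4*(t/2)) - β)^2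
        / (4*(t/2)*Real.sqrt (β^2+4*(t/2))) := by
      apply div_pos (mul_pos (mul_pos hF hE2) hsqp) (mul_pos (by linarith) hs2p)
    rw [huniq] at hval
    exact lt_irrefl 0 hval

/-- The modified Bessel function of the first kind,
`I_ν(x) = ∑_{k=0}^∞ (x/2)^{2k+ν} / (k! Γ(k+ν+1))`
(here `1/Γ` vanishes at nonpositive integer arguments, since `Real.Gamma` is `0` there). -/
noncomputable def besselI (ν x : ℝ) : ℝ :=
  ∑' k : ℕ, (x / 2) ^ (2 * (k : ℝ) + ν) / ((Nat.factorial k : ℝ) * Real.Gamma ((k : ℝ) + ν + 1))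

lemma besselI_eq_besselF (ν x : ℝ) (hx : 0 < x) :
    besselI ν x = (x/2) ^ ν * besselF ν (x^2/4) := by
  have h2 : (0:ℝ) < x/2 := by linarith
  unfold besselI besselF
  rw [← tsum_mul_left]
  apply tsum_congr
  intro k
  rw [Real.rpow_add h2, show (2*(k:ℝ)) = ((2*k : ℕ):ℝ) by push_cast; ring, Real.rpow_natCast]
  rw [pow_mul, show (x/2)^2 = x^2/4 by ring]
  ring

theorem besselI_ratio_close_to_best_lower (lam ν x : ℝ)
    (hlam : lam ∈ Set.Icc (0 : ℝ) (1 / 2)) (hν : 1 / 2 - lam ≤ ν) (hx : 0 < x) :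
    besselI (ν - 1) x / besselI ν x >
      (ν - 1 / 2 - lam +
          Real.sqrt ((Real.sqrt (2 * lam) + Real.sqrt (ν ^ 2 - (lam - 1 / 2) ^ 2)) ^ 2 + x ^ 2)) /
        x := by
  obtain ⟨h0, h1⟩ := hlam
  have hν0 : 0 ≤ ν := le_trans (by linarith) hν
  have ht : 0 < x^2/4 := by positivity
  have hcore := core lam ν (x^2/4) h0 h1 hν ht
  rw [show (Real.sqrt (2*lam) + Real.sqrt (ν^2 - (lam-1/2)^2))^2 + 4*(x^2/4)
      = (Real.sqrt (2*lam) + Real.sqrt (ν^2 - (lam-1/2)^2))^2 + x^2 by ring] at hcore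
  have h2 : (0:ℝ) < x/2 := by linarith
  have hrp : (0:ℝ) < (x/2) ^ ν := Real.rpow_pos_of_pos h2 ν
  have hF : 0 < besselF ν (x^2/4) := besselF_pos ν (by linarith) _ ht
  have hIν : 0 < besselI ν x := by
    rw [besselI_eq_besselF ν x hx]
    exact mul_pos hrp hF
  rw [gt_iff_lt, div_lt_div_iff₀ hx hIν]
  rw [besselI_eq_besselF ν x hx, besselI_eq_besselF (ν-1) x hx]
  have hkey : (x/2) ^ (ν-1) * x = 2 * (x/2) ^ ν := by
    rw [Real.rpow_sub_one (ne_of_gt h2)]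
    field_simp
  set S := Real.sqrt ((Real.sqrt (2*lam) + Real.sqrt (ν^2 - (lam-1/2)^2))^2 + x^2) with hSd
  calc (ν - 1/2 - lam + S) * ((x/2) ^ ν * besselF ν (x^2/4))
      = (x/2) ^ ν * ((ν - 1/2 - lam + S) * besselF ν (x^2/4)) := by ring
    _ < (x/2) ^ ν * (2 * besselF (ν-1) (x^2/4)) := by
        apply mul_lt_mul_of_pos_left _ hrp
        linarith
    _ = (x/2) ^ (ν-1) * besselF (ν-1) (x^2/4) * x := by
        rw [show (x/2)^(ν-1) * besselF (ν-1) (x^2/4) * x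
            = ((x/2)^(ν-1) * x) * besselF (ν-1) (x^2/4) by ring, hkey]
        ring
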